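/- arXiv:1506.08873 — 2 statements merged into one kernel-verified Lean document; each statement's English description precedes it below -/
import Mathlib

section
/- Let (R,Δ) be an odd form ring, n ∈ ℕ, (I,Ω) an odd form ideal of (R,Δ) and σ ∈ U_{2n+1}(R,Δ). Then σ ∈ U_{2n+1}((R,Δ),(I,Ω)) if and only if both of the following hold: (1) σ_{ij} − δ_{ij} ∈ I for all i,j ∈ Θ_hb; and (2) q(σ_{*j}) ∈ Ω for all j ∈ Θ_hb, and (q(σ_{*0}) ∸ (1,0))•x ∈ Ω for all x ∈ J(Δ), where σ_{*j} denotes the j-th column of σ. -/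
open scoped BigOperators

noncomputable section

/-- The index set `Θ = {-n, …, n}` for the odd-dimensional unitary group. -/
abbrev Idx (n : ℕ) : Type := {i : ℤ // i ∈ Finset.Icc (-(n : ℤ)) (n : ℤ)}

namespace Idx

/-- Negation of an index. -/
def neg {n : ℕ} (i : Idx n) : Idx n :=
  ⟨-i.1, by have h := i.2; rw [Finset.mem_Icc] at h ⊢; omega⟩

/-- The index `0`. -/
def zero (n : ℕ) : Idx n := ⟨0, by rw [Finset.mem_Icc]; omega⟩

/-- Construct an index from an integer. -/
def of (n : ℕ) (i : ℤ) (h1 : -(n : ℤ) ≤ i) (h2 : i ≤ (n : ℤ)) : Idx n :=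
  ⟨i, Finset.mem_Icc.mpr ⟨h1, h2⟩⟩

end Idx

/-- The positive indices `{1, …, n}`. -/
def posIdx (n : ℕ) : Finset (Idx n) := Finset.univ.filter (fun i => 0 < i.1)

/-- The position of an index in the ordering `1, …, n, 0, -n, …, -1`. -/
def ordIdx {n : ℕ} (i : Idx n) : ℤ :=
  if 0 < i.1 then i.1 else if i.1 = 0 then (n : ℤ) + 1 else 2 * (n : ℤ) + 2 + i.1

/-- The group `GL_{2n+1}(R)` of invertible `(2n+1) × (2n+1)` matrices. -/
abbrev GLn (R : Type*) [Ring R] (n : ℕ) : Type _ := (Matrix (Idx n) (Idx n) R)ˣ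

/-- `J(Ω) = {y | ∃ z, (y, z) ∈ Ω}`. -/
def JSet {R : Type*} (Ω : Set (R × R)) : Set R := {y | ∃ z, (y, z) ∈ Ω}

/-- `M(R, Δ) = {u | u_0 ∈ J(Δ)}`. -/
def MRD {R : Type*} (Δ : Set (R × R)) (n : ℕ) : Set (Idx n → R) :=
  {u | u (Idx.zero n) ∈ JSet Δ}

/-- `M(I, Ω) = {u | u_i ∈ I for i ∈ Θ_hb, u_0 ∈ J(Ω)}`. -/
def MIO {R : Type*} (I : Set R) (Ω : Set (R × R)) (n : ℕ) : Set (Idx n → R) :=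
  {u | (∀ i : Idx n, i.1 ≠ 0 → u i ∈ I) ∧ u (Idx.zero n) ∈ JSet Ω}

/-- The data of an odd quadruple `(R, ⁻, λ, μ)`: a ring with an anti-isomorphism `bar`,
a symmetry `lam` and an element `mu` with `mu = bar mu * lam`. -/
structure OddFormRingData (R : Type*) [Ring R] where
  bar : R → R
  lam : R
  mu : R
  bar_bijective : Function.Bijective bar
  bar_add : ∀ x y : R, bar (x + y) = bar x + bar y
  bar_mul : ∀ x y : R, bar (x * y) = bar y * bar x
  bar_one : bar 1 = 1
  bar_bar : ∀ x : R, bar (bar x) = lam * x * bar lam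
  mu_symm : mu = bar mu * lam

namespace OddFormRingData

variable {R : Type*} [Ring R] (D : OddFormRingData R)

/-- Heisenberg addition `∔` on `R × R`. -/
def hAdd (a b : R × R) : R × R := (a.1 + b.1, a.2 + b.2 - D.bar a.1 * D.mu * b.1)

/-- Heisenberg negation. -/
def hNeg (a : R × R) : R × R := (-a.1, -a.2 - D.bar a.1 * D.mu * a.1)

/-- Heisenberg subtraction `∸`. -/
def hSub (a b : R × R) : R × R := D.hAdd a (D.hNeg b)

/-- The scalar operation `(x, y) • a = (x a, ā y a)`. -/
def hSMul (a : R × R) (r : R) : R × R := (a.1 * r, D.bar r * a.2 * r)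

/-- `Δ_min = {(0, x - x̄ λ) | x ∈ R}`. -/
def DeltaMin : Set (R × R) := {p | ∃ x : R, p = (0, x - D.bar x * D.lam)}

/-- `Δ_max = {(x, y) | x̄ μ x + y + ȳ λ = 0}`. -/
def DeltaMax : Set (R × R) := {p | D.bar p.1 * D.mu * p.1 + p.2 + D.bar p.2 * D.lam = 0}

/-- `Δ` is an odd form parameter. -/
structure IsFormParam (Δ : Set (R × R)) : Prop where
  add_mem : ∀ a ∈ Δ, ∀ b ∈ Δ, D.hAdd a b ∈ Δ
  neg_mem : ∀ a ∈ Δ, D.hNeg a ∈ Δ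
  smul_mem : ∀ a ∈ Δ, ∀ r : R, D.hSMul a r ∈ Δ
  min_le : D.DeltaMin ⊆ Δ
  le_max : Δ ⊆ D.DeltaMax

/-- `I` is an involution invariant (two-sided) ideal of `R`. -/
structure IsInvIdeal (I : Set R) : Prop where
  zero_mem : (0 : R) ∈ I
  add_mem : ∀ x ∈ I, ∀ y ∈ I, x + y ∈ I
  neg_mem : ∀ x ∈ I, -x ∈ I
  mul_left : ∀ r : R, ∀ x ∈ I, r * x ∈ I
  mul_right : ∀ r : R, ∀ x ∈ I, x * r ∈ I
  bar_mem : ∀ x ∈ I, D.bar x ∈ I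

/-- `Ĩ = {x | ȳ μ x ∈ I for all y ∈ J(Δ)}`. -/
def tildeI (Δ : Set (R × R)) (I : Set R) : Set R :=
  {x | ∀ y ∈ JSet Δ, D.bar y * D.mu * x ∈ I}

/-- `Ω^I_min`, the `∔`-subgroup of `R × R` generated by `{(0, x - x̄λ) | x ∈ I}` and
`{a • c | a ∈ Δ, c ∈ I}`. -/
inductive OmegaMin (Δ : Set (R × R)) (I : Set R) : R × R → Prop
  | base (x : R) (hx : x ∈ I) : OmegaMin Δ I (0, x - D.bar x * D.lam)
  | smul (a : R × R) (ha : a ∈ Δ) (c : R) (hc : c ∈ I) : OmegaMin Δ I (D.hSMul a c)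
  | add (a b : R × R) : OmegaMin Δ I a → OmegaMin Δ I b → OmegaMin Δ I (D.hAdd a b)
  | neg (a : R × R) : OmegaMin Δ I a → OmegaMin Δ I (D.hNeg a)

/-- `Ω^I_min` as a set. -/
def OmegaMinSet (Δ : Set (R × R)) (I : Set R) : Set (R × R) := {p | D.OmegaMin Δ I p}

/-- `Ω^I_max = Δ ∩ (Ĩ × I)`. -/
def OmegaMaxSet (Δ : Set (R × R)) (I : Set R) : Set (R × R) :=
  {p | p ∈ Δ ∧ p.1 ∈ D.tildeI Δ I ∧ p.2 ∈ I}

/-- `Ω` is a relative odd form parameter for `I`. -/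
structure IsRelFormParam (Δ : Set (R × R)) (I : Set R) (Ω : Set (R × R)) : Prop where
  add_mem : ∀ a ∈ Ω, ∀ b ∈ Ω, D.hAdd a b ∈ Ω
  neg_mem : ∀ a ∈ Ω, D.hNeg a ∈ Ω
  smul_mem : ∀ a ∈ Ω, ∀ r : R, D.hSMul a r ∈ Ω
  min_le : D.OmegaMinSet Δ I ⊆ Ω
  le_max : Ω ⊆ D.OmegaMaxSet Δ I

/-- `(I, Ω)` is an odd form ideal of `(R, Δ)`. -/
def IsFormIdeal (Δ : Set (R × R)) (I : Set R) (Ω : Set (R × R)) : Prop :=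
  D.IsInvIdeal I ∧ D.IsRelFormParam Δ I Ω

/-- `Ω^{-1} = {(x, y) | (x, ȳ) ∈ Ω}`. -/
def paramInv (Ω : Set (R × R)) : Set (R × R) := {p | (p.1, D.bar p.2) ∈ Ω}

/-- `Ω^{-ε(i)}`. -/
def paramPow {n : ℕ} (Ω : Set (R × R)) (i : Idx n) : Set (R × R) :=
  if 0 < i.1 then D.paramInv Ω else Ω

/-- The λ-Hermitian form `b`. -/
def bform {n : ℕ} (u v : Idx n → R) : R :=
  (∑ i ∈ posIdx n, D.bar (u i) * v i.neg) + D.bar (u (Idx.zero n)) * D.mu * v (Idx.zero n)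
    + ∑ i ∈ posIdx n, D.bar (u i.neg) * D.lam * v i

/-- The quadratic map `q`. -/
def qform {n : ℕ} (u : Idx n → R) : R × R :=
  (u (Idx.zero n), ∑ i ∈ posIdx n, D.bar (u i) * u i.neg)

/-- The odd-dimensional unitary group `U_{2n+1}(R, Δ)`, as a subset of `GL_{2n+1}(R)`. -/
def unitary (Δ : Set (R × R)) (n : ℕ) : Set (GLn R n) :=
  {σ | (∀ u v : Idx n → R,
          D.bform (Matrix.mulVec σ.val u)
            (Matrix.mulVec σ.val v) = D.bform u v)
      ∧ ∀ u : Idx n → R,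
          D.hSub (D.qform (Matrix.mulVec σ.val u)) (D.qform u) ∈ Δ}

/-- The short root matrix `T_{ij}(x)`. -/
def shortRootMat {n : ℕ} (i j : Idx n) (x : R) : Matrix (Idx n) (Idx n) R :=
  1 + Matrix.single i j x
    - Matrix.single j.neg i.neg
        ((if 0 < j.1 then (1 : R) else D.bar D.lam) * D.bar x *
          (if 0 < i.1 then (1 : R) else D.lam))

/-- The extra short root matrix `T_i(x, y)`. -/
def extraShortRootMat {n : ℕ} (i : Idx n) (x y : R) : Matrix (Idx n) (Idx n) R :=
  1 + Matrix.single (Idx.zero n) i.neg x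
    - Matrix.single i (Idx.zero n)
        ((if 0 < i.1 then D.bar D.lam else (1 : R)) * D.bar x * D.mu)
    + Matrix.single i i.neg y

/-- `g` is a short root matrix `T_{ij}(x)`. -/
def IsShortRootElem {n : ℕ} (g : GLn R n) : Prop :=
  ∃ (i j : Idx n) (x : R), i.1 ≠ 0 ∧ j.1 ≠ 0 ∧ i.1 ≠ j.1 ∧ i.1 ≠ -j.1 ∧
    g.val = D.shortRootMat i j x

/-- `g` is an extra short root matrix `T_i(x, y)` with `(x, y) ∈ Δ^{-ε(i)}`. -/
def IsExtraShortRootElem {n : ℕ} (Δ : Set (R × R)) (g : GLn R n) : Prop :=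
  ∃ (i : Idx n) (x y : R), i.1 ≠ 0 ∧ (x, y) ∈ D.paramPow Δ i ∧
    g.val = D.extraShortRootMat i x y

/-- The elementary subgroup `EU_{2n+1}(R, Δ)`. -/
def elemGroup (Δ : Set (R × R)) (n : ℕ) : Subgroup (GLn R n) :=
  Subgroup.closure {g | D.IsShortRootElem g ∨ D.IsExtraShortRootElem Δ g}

/-- `g` is an `(I, Ω)`-elementary short root matrix. -/
def IsRelShortRootElem {n : ℕ} (I : Set R) (g : GLn R n) : Prop :=
  ∃ (i j : Idx n) (x : R), i.1 ≠ 0 ∧ j.1 ≠ 0 ∧ i.1 ≠ j.1 ∧ i.1 ≠ -j.1 ∧ x ∈ I ∧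
    g.val = D.shortRootMat i j x

/-- `g` is an `(I, Ω)`-elementary extra short root matrix. -/
def IsRelExtraShortRootElem {n : ℕ} (Ω : Set (R × R)) (g : GLn R n) : Prop :=
  ∃ (i : Idx n) (x y : R), i.1 ≠ 0 ∧ (x, y) ∈ D.paramPow Ω i ∧
    g.val = D.extraShortRootMat i x y

/-- The preelementary subgroup `EU_{2n+1}(I, Ω)`. -/
def preElemGroup (I : Set R) (Ω : Set (R × R)) (n : ℕ) : Subgroup (GLn R n) :=
  Subgroup.closure {g | D.IsRelShortRootElem I g ∨ D.IsRelExtraShortRootElem Ω g}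

/-- The relative elementary subgroup `EU_{2n+1}((R, Δ), (I, Ω))`,
the normal closure of `EU_{2n+1}(I, Ω)` in `EU_{2n+1}(R, Δ)`. -/
def elemRelGroup (Δ : Set (R × R)) (I : Set R) (Ω : Set (R × R)) (n : ℕ) : Subgroup (GLn R n) :=
  Subgroup.closure {x | ∃ e ∈ D.elemGroup Δ n, ∃ g ∈ D.preElemGroup I Ω n, x = e * g * e⁻¹}

/-- The principal congruence subgroup `U_{2n+1}((R, Δ), (I, Ω))`. -/
def principalCongruence (Δ : Set (R × R)) (I : Set R) (Ω : Set (R × R)) (n : ℕ) :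
    Set (GLn R n) :=
  {σ | σ ∈ D.unitary Δ n
      ∧ (∀ i j : Idx n, i.1 ≠ 0 → j.1 ≠ 0 →
          σ.val i j - (if i = j then (1 : R) else 0) ∈ I)
      ∧ ∀ u ∈ MRD Δ n,
          D.hSub (D.qform (Matrix.mulVec σ.val u)) (D.qform u) ∈ Ω}

/-- The group `Ũ_{2n+1}((R, Δ), (I, Ω))`. -/
def tildeU (Δ : Set (R × R)) (I : Set R) (Ω : Set (R × R)) (n : ℕ) : Set (GLn R n) :=
  {σ | σ ∈ D.unitary Δ n ∧ ∀ u ∈ MIO I Ω n,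
      D.hSub (D.qform (Matrix.mulVec σ.val u)) (D.qform u) ∈ Ω
      ∧ D.hSub (D.qform (Matrix.mulVec ((σ⁻¹).val) u)) (D.qform u) ∈ Ω}

/-- The full congruence subgroup `CU_{2n+1}((R, Δ), (I, Ω))`. -/
def fullCongruence (Δ : Set (R × R)) (I : Set R) (Ω : Set (R × R)) (n : ℕ) : Set (GLn R n) :=
  {σ | σ ∈ D.tildeU Δ I Ω n ∧ ∀ τ ∈ D.elemGroup Δ n,
      σ * τ * σ⁻¹ * τ⁻¹ ∈ D.principalCongruence Δ I Ω n}

/-- `H` is a subgroup of `U_{2n+1}(R, Δ)`. -/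
structure IsSubgroupOfUnitary (Δ : Set (R × R)) (n : ℕ) (H : Set (GLn R n)) : Prop where
  subset : H ⊆ D.unitary Δ n
  one_mem : (1 : GLn R n) ∈ H
  mul_mem : ∀ a ∈ H, ∀ b ∈ H, a * b ∈ H
  inv_mem : ∀ a ∈ H, a⁻¹ ∈ H

/-- `H` is normalized by the elementary subgroup `EU_{2n+1}(R, Δ)`. -/
def IsENormal (Δ : Set (R × R)) (n : ℕ) (H : Set (GLn R n)) : Prop :=
  ∀ e ∈ D.elemGroup Δ n, ∀ h ∈ H, e * h * e⁻¹ ∈ H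

/-- The ideal part of the level of `H`. -/
def levelI {n : ℕ} (H : Set (GLn R n)) : Set R :=
  {x | ∃ i j : Idx n, i.1 ≠ 0 ∧ j.1 ≠ 0 ∧ i.1 ≠ j.1 ∧ i.1 ≠ -j.1 ∧
      ∃ g ∈ H, g.val = D.shortRootMat i j x}

/-- The form parameter part of the level of `H`. -/
def levelOmega {n : ℕ} (Δ : Set (R × R)) (H : Set (GLn R n)) : Set (R × R) :=
  {p | p ∈ Δ ∧ ∃ i : Idx n, i.1 < 0 ∧
      ∃ g ∈ H, g.val = D.extraShortRootMat i p.1 p.2}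

/-- The relative odd form parameter `^σΩ` for `I` defined by `Ω` and `σ`. -/
def transportedParam (Δ : Set (R × R)) (I : Set R) (Ω : Set (R × R)) (n : ℕ) (σ : GLn R n) :
    Set (R × R) :=
  {p | ∃ x y : R, (x, y) ∈ Ω ∧ ∃ m ∈ D.OmegaMinSet Δ I,
      p = D.hAdd (D.hAdd
            (D.hSMul
              (D.hSub (D.qform (fun i => σ.val i (Idx.zero n)))
                ((1 : R), (0 : R))) x)
            (x, y)) m}

/-- `TEU_{2n+1}(R, Δ)`: upper triangular elementary matrices with ones on the diagonal,
with respect to the index ordering `1, …, n, 0, -n, …, -1`. -/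
def upperTriangularElem (Δ : Set (R × R)) (n : ℕ) : Set (GLn R n) :=
  {f | f ∈ D.elemGroup Δ n
      ∧ (∀ i j : Idx n, ordIdx j < ordIdx i → f.val i j = 0)
      ∧ ∀ i : Idx n, f.val i i = 1}

/-- `UEU_{2n+1}(R, Δ)`: elementary matrices of block form `(A B C; 0 1 D; 0 0 E)`
with respect to the decomposition `Θ₊, {0}, Θ₋`. -/
def blockUpperElem (Δ : Set (R × R)) (n : ℕ) : Set (GLn R n) :=
  {f | f ∈ D.elemGroup Δ n
      ∧ (∀ i j : Idx n, i.1 ≤ 0 → 0 < j.1 → f.val i j = 0)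
      ∧ f.val (Idx.zero n) (Idx.zero n) = 1
      ∧ ∀ i : Idx n, i.1 < 0 → f.val i (Idx.zero n) = 0}

/-- `R` is quasifinite: it is the union of a directed family of subrings, each closed
under the involution, containing `λ` and `μ`, and finitely generated as a module over its
center. -/
def IsQuasifinite : Prop :=
  ∃ S : Set (Subring R), S.Nonempty ∧ DirectedOn (· ≤ ·) S ∧
    (∀ A ∈ S, (∀ x ∈ A, D.bar x ∈ A) ∧ D.lam ∈ A ∧ D.mu ∈ A ∧
      ∃ (m : ℕ) (v : Fin m → R), (∀ k, v k ∈ A) ∧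
        ∀ x ∈ A, ∃ c : Fin m → R,
          (∀ k, c k ∈ A ∧ ∀ y ∈ A, c k * y = y * c k) ∧ x = ∑ k, c k * v k) ∧
    ∀ x : R, ∃ A ∈ S, x ∈ A

end OddFormRingData

/-- The Jacobson radical of a (possibly noncommutative) ring. -/
def jacobsonRadical (R : Type*) [Ring R] : Ideal R := sInf {J : Ideal R | J.IsMaximal}

/-- `R` is semilocal: `R / rad R` is semisimple (hence semisimple Artinian). -/
def IsSemilocalRing (R : Type*) [Ring R] : Prop :=
  IsSemisimpleModule R (R ⧸ jacobsonRadical R)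

/-- A bundled (possibly noncommutative) ring. -/
structure BundledRing : Type (u + 1) where
  carrier : Type u
  [str : Ring carrier]

attribute [instance] BundledRing.str

instance : CoeSort BundledRing (Type u) := ⟨BundledRing.carrier⟩

universe u

namespace OddFormRingData

variable {R : Type*} [Ring R] (D : OddFormRingData R)

/-- `bar` as an additive homomorphism. -/
def barHom : R →+ R := AddMonoidHom.mk' D.bar D.bar_add

lemma barHom_apply (x : R) : D.barHom x = D.bar x := rfl

lemma bar_zero : D.bar (0 : R) = 0 := by
  rw [← D.barHom_apply]; exact map_zero _

lemma bar_sub (x y : R) : D.bar (x - y) = D.bar x - D.bar y := by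
  rw [← D.barHom_apply, ← D.barHom_apply, ← D.barHom_apply]; exact map_sub _ _ _

lemma bar_neg (x : R) : D.bar (-x) = -D.bar x := by
  rw [← D.barHom_apply, ← D.barHom_apply]; exact map_neg _ _

lemma bar_sum {ι : Type*} (s : Finset ι) (f : ι → R) :
    D.bar (∑ i ∈ s, f i) = ∑ i ∈ s, D.bar (f i) := by
  rw [← D.barHom_apply]
  rw [map_sum]
  rfl

lemma bar_inj : Function.Injective D.bar := D.bar_bijective.injective

lemma lam_mul_bar_lam : D.lam * D.bar D.lam = 1 := by
  have h := D.bar_bar 1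
  rw [D.bar_one, D.bar_one, mul_one] at h
  exact h.symm

lemma bar_lam_mul_lam : D.bar D.lam * D.lam = 1 := by
  have hinj : Function.Injective (fun x : R => D.lam * x) := by
    intro x y h
    have h' : D.lam * x = D.lam * y := h
    have h2 : D.lam * x * D.bar D.lam = D.lam * y * D.bar D.lam := by rw [h']
    rw [← D.bar_bar, ← D.bar_bar] at h2
    exact D.bar_inj (D.bar_inj h2)
  have h3 : D.lam * (D.bar D.lam * D.lam) = D.lam * 1 := by
    rw [← mul_assoc, D.lam_mul_bar_lam, one_mul, mul_one]
  exact hinj h3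

lemma bar_mu_mul_lam : D.bar D.mu * D.lam = D.mu := D.mu_symm.symm

lemma barbar_conj (a z : R) :
    D.bar (D.bar a * D.mu * z) * D.lam = D.bar z * D.mu * a := by
  rw [D.bar_mul, D.bar_mul, D.bar_bar]
  simp only [mul_assoc]
  rw [D.bar_lam_mul_lam, mul_one, ← mul_assoc (D.bar D.mu), D.bar_mu_mul_lam]

lemma bar_sum_lam {ι : Type*} (s : Finset ι) (f g : ι → R) :
    D.bar (∑ i ∈ s, D.bar (f i) * g i) * D.lam = ∑ i ∈ s, D.bar (g i) * D.lam * f i := by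
  rw [D.bar_sum, Finset.sum_mul]
  refine Finset.sum_congr rfl fun i _ => ?_
  rw [D.bar_mul, D.bar_bar]
  simp only [mul_assoc]
  rw [D.bar_lam_mul_lam, mul_one]

lemma hSub_eq (p r : R × R) :
    D.hSub p r = (p.1 - r.1, p.2 - r.2 - D.bar r.1 * D.mu * r.1 + D.bar p.1 * D.mu * r.1) := by
  simp only [hSub, hAdd, hNeg, Prod.mk.injEq]
  constructor
  · noncomm_ring
  · noncomm_ring

lemma hSMul_one (p : R × R) : D.hSMul p 1 = p := by
  simp [hSMul, D.bar_one]

lemma hSub_smul (p r : R × R) (x : R) :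
    D.hSub (D.hSMul p x) (D.hSMul r x) = D.hSMul (D.hSub p r) x := by
  rw [D.hSub_eq, D.hSub_eq]
  simp only [hSMul, Prod.mk.injEq]
  constructor
  · noncomm_ring
  · simp only [D.bar_mul]
    noncomm_ring

lemma conj_sum {ι : Type*} (s : Finset ι) (f h : ι → R) (a : R) :
    ∑ i ∈ s, D.bar (f i * a) * (h i * a) = D.bar a * (∑ i ∈ s, D.bar (f i) * h i) * a := by
  rw [Finset.mul_sum, Finset.sum_mul]
  refine Finset.sum_congr rfl fun i _ => ?_
  rw [D.bar_mul]; noncomm_ring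

lemma qform_smul {n : ℕ} (u : Idx n → R) (a : R) :
    D.qform (fun i => u i * a) = D.hSMul (D.qform u) a := by
  simp only [qform, hSMul]
  refine Prod.ext_iff.mpr ⟨rfl, ?_⟩
  exact D.conj_sum (posIdx n) (fun i => u i) (fun i => u i.neg) a

end OddFormRingData
lemma mulVec_single_col {R : Type*} [Ring R] {m : Type*} [Fintype m] [DecidableEq m]
    (M : Matrix m m R) (j : m) (x : R) :
    M.mulVec (Pi.single j x) = fun i => M i j * x := by
  funext i; rw [Matrix.mulVec_single]; rfl

lemma Idx.neg_val {n : ℕ} (i : Idx n) : (Idx.neg i).1 = -i.1 := rfl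

lemma Idx.zero_val (n : ℕ) : (Idx.zero n).1 = 0 := rfl

lemma mem_posIdx {n : ℕ} {i : Idx n} : i ∈ posIdx n ↔ 0 < i.1 := by
  simp [posIdx]

lemma Idx.zero_ne {n : ℕ} {j : Idx n} (hj : j.1 ≠ 0) : Idx.zero n ≠ j := by
  intro h; exact hj (by rw [← h]; rfl)

lemma Idx.neg_ne_zero {n : ℕ} {i : Idx n} (hi : i.1 ≠ 0) : (Idx.neg i).1 ≠ 0 := by
  rw [Idx.neg_val]; omega

lemma Idx.neg_ne_self {n : ℕ} {i : Idx n} (hi : i.1 ≠ 0) : Idx.neg i ≠ i := by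
  intro h
  have := congrArg Subtype.val h
  rw [Idx.neg_val] at this
  omega

lemma Idx.neg_inj_iff {n : ℕ} {i j : Idx n} : Idx.neg i = Idx.neg j ↔ i = j := by
  constructor
  · intro h
    have := congrArg Subtype.val h
    rw [Idx.neg_val, Idx.neg_val] at this
    exact Subtype.ext (by omega)
  · intro h; rw [h]

namespace OddFormRingData

variable {R : Type*} [Ring R] (D : OddFormRingData R)

lemma hSub_pair_zero (p : R × R) : D.hSub p (0, 0) = p := by
  rw [D.hSub_eq]
  simp [D.bar_zero]

lemma qform_single_ne {n : ℕ} (j : Idx n) (hj : j.1 ≠ 0) (a : R) :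
    D.qform (Pi.single j a) = (0, 0) := by
  simp only [qform, Prod.mk.injEq]
  refine ⟨?_, ?_⟩
  · apply Pi.single_eq_of_ne (Idx.zero_ne hj)
  · refine Finset.sum_eq_zero fun k hk => ?_
    by_cases hkj : k = j
    · subst hkj
      rw [Pi.single_eq_of_ne (Idx.neg_ne_self (by omega : k.1 ≠ 0))]
      rw [mul_zero]
    · rw [Pi.single_eq_of_ne hkj, D.bar_zero, zero_mul]

lemma qform_single_zero {n : ℕ} (x : R) :
    D.qform (Pi.single (Idx.zero n) x) = (x, 0) := by
  simp only [qform, Prod.mk.injEq]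
  refine ⟨Pi.single_eq_same _ _, ?_⟩
  refine Finset.sum_eq_zero fun k hk => ?_
  have hk' : 0 < k.1 := mem_posIdx.mp hk
  rw [Pi.single_eq_of_ne (by exact fun h => by have := congrArg Subtype.val h; rw [Idx.zero_val] at this; omega)]
  rw [D.bar_zero, zero_mul]

end OddFormRingData
namespace OddFormRingData

variable {R : Type*} [Ring R] (D : OddFormRingData R)

lemma qQuad {n : ℕ} (v w p pw : Idx n → R)
    (hbeq : D.bform p pw = D.bform v w) :
    D.hSub (D.qform (p + pw)) (D.qform (v + w))
      = D.hAdd (D.hAdd (D.hSub (D.qform p) (D.qform v)) (D.hSub (D.qform pw) (D.qform w)))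
          (0,
            ((∑ i ∈ posIdx n, D.bar (pw i) * p i.neg) - (∑ i ∈ posIdx n, D.bar (w i) * v i.neg)
              - D.bar (v (Idx.zero n)) * D.mu * (pw (Idx.zero n) - w (Idx.zero n)))
            - D.bar
              ((∑ i ∈ posIdx n, D.bar (pw i) * p i.neg) - (∑ i ∈ posIdx n, D.bar (w i) * v i.neg)
                - D.bar (v (Idx.zero n)) * D.mu * (pw (Idx.zero n) - w (Idx.zero n))) * D.lam) := by
  have hz : D.bar
      ((∑ i ∈ posIdx n, D.bar (pw i) * p i.neg) - (∑ i ∈ posIdx n, D.bar (w i) * v i.neg)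
        - D.bar (v (Idx.zero n)) * D.mu * (pw (Idx.zero n) - w (Idx.zero n))) * D.lam
      = (∑ i ∈ posIdx n, D.bar (p i.neg) * D.lam * pw i)
        - (∑ i ∈ posIdx n, D.bar (v i.neg) * D.lam * w i)
        - (D.bar (pw (Idx.zero n)) - D.bar (w (Idx.zero n))) * D.mu * v (Idx.zero n) := by
    rw [D.bar_sub, D.bar_sub, sub_mul, sub_mul, D.bar_sum_lam, D.bar_sum_lam, D.barbar_conj,
      D.bar_sub]
  rw [hz]
  simp only [bform] at hbeq
  have hc : (∑ i ∈ posIdx n, D.bar (p i) * pw i.neg)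
      = ((∑ i ∈ posIdx n, D.bar (v i) * w i.neg) + D.bar (v (Idx.zero n)) * D.mu * w (Idx.zero n)
          + ∑ i ∈ posIdx n, D.bar (v i.neg) * D.lam * w i)
        - (∑ i ∈ posIdx n, D.bar (p i.neg) * D.lam * pw i)
        - D.bar (p (Idx.zero n)) * D.mu * pw (Idx.zero n) := by
    rw [eq_sub_iff_add_eq, eq_sub_iff_add_eq]
    exact hbeq
  simp only [D.hSub_eq, hAdd, qform, Pi.add_apply, D.bar_add, D.bar_sub, D.bar_neg, add_mul, mul_add, mul_zero,
    sub_zero, add_zero, Finset.sum_add_distrib, Prod.mk.injEq]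
  rw [hc]
  constructor
  · noncomm_ring
  · noncomm_ring

end OddFormRingData
namespace OddFormRingData

variable {R : Type*} [Ring R] (D : OddFormRingData R)

section Param

variable {Δ : Set (R × R)}

lemma pair_zero_mem_param (hΔ : D.IsFormParam Δ) : ((0 : R), (0 : R)) ∈ Δ := by
  have h : ((0 : R), (0 : R)) ∈ D.DeltaMin := ⟨0, by simp [D.bar_zero]⟩
  exact hΔ.min_le h

lemma J_zero (hΔ : D.IsFormParam Δ) : (0 : R) ∈ JSet Δ := ⟨0, D.pair_zero_mem_param hΔ⟩

lemma J_add (hΔ : D.IsFormParam Δ) (x y : R) (hx : x ∈ JSet Δ) (hy : y ∈ JSet Δ) :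
    x + y ∈ JSet Δ := by
  obtain ⟨zx, hx⟩ := hx
  obtain ⟨zy, hy⟩ := hy
  exact ⟨(D.hAdd (x, zx) (y, zy)).2, hΔ.add_mem _ hx _ hy⟩

end Param

section Ideal

variable {I : Set R} {Δ Ω : Set (R × R)}

lemma isub (hI : D.IsInvIdeal I) {x y : R} (hx : x ∈ I) (hy : y ∈ I) : x - y ∈ I := by
  rw [sub_eq_add_neg]
  exact hI.add_mem _ hx _ (hI.neg_mem _ hy)

lemma isum (hI : D.IsInvIdeal I) {ι : Type*} (s : Finset ι) (f : ι → R)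
    (hf : ∀ k ∈ s, f k ∈ I) : ∑ k ∈ s, f k ∈ I :=
  Finset.sum_induction f (· ∈ I) (fun a b ha hb => hI.add_mem _ ha _ hb) hI.zero_mem hf

lemma prod_sub_mem (hI : D.IsInvIdeal I) {x1 y1 x2 y2 : R}
    (h1 : x1 - y1 ∈ I) (h2 : x2 - y2 ∈ I) : x1 * x2 - y1 * y2 ∈ I := by
  have h : x1 * x2 - y1 * y2 = (x1 - y1) * x2 + y1 * (x2 - y2) := by noncomm_ring
  rw [h]
  exact hI.add_mem _ (hI.mul_right _ _ h1) _ (hI.mul_left _ _ h2)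

lemma omega_base (hIΩ : D.IsFormIdeal Δ I Ω) {z : R} (hz : z ∈ I) :
    ((0 : R), z - D.bar z * D.lam) ∈ Ω :=
  hIΩ.2.min_le (OmegaMin.base z hz)

lemma omega_zero (hIΩ : D.IsFormIdeal Δ I Ω) : ((0 : R), (0 : R)) ∈ Ω := by
  have h := D.omega_base hIΩ hIΩ.1.zero_mem
  simpa [D.bar_zero] using h

lemma tildeI_key (hI : D.IsInvIdeal I) {z y : R} (hz : z ∈ D.tildeI Δ I)
    (hy : y ∈ JSet Δ) : D.bar z * D.mu * y ∈ I := by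
  have h1 : D.bar y * D.mu * z ∈ I := hz y hy
  have h2 := hI.mul_right D.lam _ (hI.bar_mem _ h1)
  rwa [D.barbar_conj] at h2

end Ideal

section Sigma

variable {n : ℕ} {Δ : Set (R × R)} {I : Set R} {Ω : Set (R × R)}

lemma entry_sum_mem (hI : D.IsInvIdeal I) (m : Matrix (Idx n) (Idx n) R)
    (h1 : ∀ i j : Idx n, i.1 ≠ 0 → j.1 ≠ 0 → m i j - (if i = j then (1 : R) else 0) ∈ I)
    (v : Idx n → R) (hv0 : v (Idx.zero n) = 0) (i : Idx n) (hi : i.1 ≠ 0) :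
    m.mulVec v i - v i ∈ I := by
  have e1 : m.mulVec v i = ∑ k : Idx n, m i k * v k := rfl
  have e2 : v i = ∑ k : Idx n, (if i = k then (1 : R) else 0) * v k := by
    simp [ite_mul]
  rw [e1, e2, ← Finset.sum_sub_distrib]
  refine D.isum hI _ _ fun k _ => ?_
  rw [← sub_mul]
  by_cases hk0 : k.1 = 0
  · have hk : k = Idx.zero n := Subtype.ext (by rw [hk0]; rfl)
    rw [hk, hv0, mul_zero]
    exact hI.zero_mem
  · exact hI.mul_right _ _ (h1 i k hi hk0)

lemma Qeq_col (σ : GLn R n) (j : Idx n) (hj : j.1 ≠ 0) (a : R) :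
    D.hSub (D.qform (σ.val.mulVec (Pi.single j a))) (D.qform (Pi.single j a))
      = D.hSMul (D.qform (fun i => σ.val i j)) a := by
  rw [mulVec_single_col, D.qform_single_ne j hj a, D.hSub_pair_zero, D.qform_smul]

lemma Qeq_col0 (σ : GLn R n) (x : R) :
    D.hSub (D.qform (σ.val.mulVec (Pi.single (Idx.zero n) x))) (D.qform (Pi.single (Idx.zero n) x))
      = D.hSMul (D.hSub (D.qform (fun i => σ.val i (Idx.zero n))) (1, 0)) x := by
  rw [mulVec_single_col, D.qform_single_zero, ← D.hSub_smul, D.qform_smul]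
  congr 1
  simp [hSMul]

lemma sigma00_J (hΔ : D.IsFormParam Δ) (σ : GLn R n) (hσ : σ ∈ D.unitary Δ n)
    {x : R} (hx : x ∈ JSet Δ) :
    σ.val (Idx.zero n) (Idx.zero n) * x ∈ JSet Δ := by
  have h := hσ.2 (Pi.single (Idx.zero n) x)
  rw [mulVec_single_col, D.qform_smul, D.qform_single_zero] at h
  have h1 : σ.val (Idx.zero n) (Idx.zero n) * x - x ∈ JSet Δ := by
    refine ⟨(D.hSub (D.hSMul (D.qform fun i => σ.val i (Idx.zero n)) x) (x, 0)).2, ?_⟩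
    have hfst : (D.hSub (D.hSMul (D.qform fun i => σ.val i (Idx.zero n)) x) (x, 0)).1
        = σ.val (Idx.zero n) (Idx.zero n) * x - x := by
      rw [D.hSub_eq]
      rfl
    rw [← hfst]
    exact h
  have h2 := D.J_add hΔ _ _ h1 hx
  have h3 : σ.val (Idx.zero n) (Idx.zero n) * x - x + x
      = σ.val (Idx.zero n) (Idx.zero n) * x := by abel
  rwa [h3] at h2

end Sigma

end OddFormRingData
namespace OddFormRingData

variable {R : Type*} [Ring R] (D : OddFormRingData R)

variable {n : ℕ} {Δ : Set (R × R)} {I : Set R} {Ω : Set (R × R)}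

lemma col_zero_entry_mem (hΔ : D.IsFormParam Δ) (hIΩ : D.IsFormIdeal Δ I Ω)
    (σ : GLn R n) (hσ : σ ∈ D.unitary Δ n)
    (h1 : ∀ i j : Idx n, i.1 ≠ 0 → j.1 ≠ 0 → σ.val i j - (if i = j then (1 : R) else 0) ∈ I)
    (h2a : ∀ j : Idx n, j.1 ≠ 0 → D.qform (fun i => σ.val i j) ∈ Ω)
    {x : R} (hx : x ∈ JSet Δ) {i : Idx n} (hi : i ∈ posIdx n) :
    σ.val i (Idx.zero n) * x ∈ I := by
  have hI := hIΩ.1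
  have hipos : 0 < i.1 := mem_posIdx.mp hi
  set j : Idx n := Idx.neg i with hjdef
  have hj : j.1 ≠ 0 := by rw [hjdef, Idx.neg_val]; omega
  have hbj := hσ.1 (Pi.single j (1 : R)) (Pi.single (Idx.zero n) x)
  rw [mulVec_single_col, mulVec_single_col] at hbj
  have hrhs : D.bform (Pi.single j (1 : R)) (Pi.single (Idx.zero n) x) = 0 := by
    simp only [bform]
    have s1 : ∑ k ∈ posIdx n,
        D.bar ((Pi.single j (1 : R) : Idx n → R) k) * (Pi.single (Idx.zero n) x : Idx n → R) k.neg = 0 :=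
      Finset.sum_eq_zero fun k hk => by
        have hkpos : 0 < k.1 := mem_posIdx.mp hk
        rw [Pi.single_eq_of_ne (show k.neg ≠ Idx.zero n from fun h => by
          have := congrArg Subtype.val h; rw [Idx.neg_val, Idx.zero_val] at this; omega)]
        rw [mul_zero]
    have s2 : D.bar ((Pi.single j (1 : R) : Idx n → R) (Idx.zero n)) * D.mu
        * (Pi.single (Idx.zero n) x : Idx n → R) (Idx.zero n) = 0 := by
      rw [Pi.single_eq_of_ne (Idx.zero_ne hj), D.bar_zero, zero_mul, zero_mul]
    have s3 : ∑ k ∈ posIdx n,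
        D.bar ((Pi.single j (1 : R) : Idx n → R) k.neg) * D.lam
          * (Pi.single (Idx.zero n) x : Idx n → R) k = 0 :=
      Finset.sum_eq_zero fun k hk => by
        have hkpos : 0 < k.1 := mem_posIdx.mp hk
        rw [Pi.single_eq_of_ne (show k ≠ Idx.zero n from fun h => by
          have := congrArg Subtype.val h; rw [Idx.zero_val] at this; omega)]
        rw [mul_zero]
    rw [s1, s2, s3, add_zero, add_zero]
  rw [hrhs] at hbj
  simp only [bform, mul_one] at hbj
  -- hbj : A + B + C = 0
  set A := ∑ k ∈ posIdx n, D.bar (σ.val k j) * (σ.val k.neg (Idx.zero n) * x) with hA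
  set B := D.bar (σ.val (Idx.zero n) j) * D.mu * (σ.val (Idx.zero n) (Idx.zero n) * x) with hB
  set C := ∑ k ∈ posIdx n, D.bar (σ.val k.neg j) * D.lam * (σ.val k (Idx.zero n) * x) with hC
  have hAI : A ∈ I := by
    refine D.isum hI _ _ fun k hk => ?_
    have hkpos : 0 < k.1 := mem_posIdx.mp hk
    have hkj : k ≠ j := fun h => by
      have := congrArg Subtype.val h; rw [hjdef, Idx.neg_val] at this; omega
    have hmem := h1 k j (by omega) hj
    rw [if_neg hkj, sub_zero] at hmem
    exact hI.mul_right _ _ (hI.bar_mem _ hmem)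
  have hBI : B ∈ I := by
    have hz : σ.val (Idx.zero n) j ∈ D.tildeI Δ I := by
      have hm := hIΩ.2.le_max (h2a j hj)
      exact hm.2.1
    exact D.tildeI_key hI hz (D.sigma00_J hΔ σ hσ hx)
  set E := ∑ k ∈ posIdx n,
      D.bar (σ.val k.neg j - (if k = i then (1 : R) else 0)) * D.lam
        * (σ.val k (Idx.zero n) * x) with hE
  have hEI : E ∈ I := by
    refine D.isum hI _ _ fun k hk => ?_
    have hkpos : 0 < k.1 := mem_posIdx.mp hk
    have hmem := h1 k.neg j (Idx.neg_ne_zero (by omega)) hj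
    have hiff : (if k.neg = j then (1 : R) else 0) = (if k = i then (1 : R) else 0) := by
      by_cases h : k = i
      · rw [if_pos h, if_pos (by rw [h, hjdef])]
      · rw [if_neg h, if_neg (fun hh => h (by rw [hjdef] at hh; exact Idx.neg_inj_iff.mp hh))]
    rw [hiff] at hmem
    exact hI.mul_right _ _ (hI.mul_right _ _ (hI.bar_mem _ hmem))
  have hCE : C = E + D.lam * (σ.val i (Idx.zero n) * x) := by
    rw [hC, hE]
    have hterm : ∀ k ∈ posIdx n,
        D.bar (σ.val k.neg j) * D.lam * (σ.val k (Idx.zero n) * x)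
          = D.bar (σ.val k.neg j - (if k = i then (1 : R) else 0)) * D.lam
              * (σ.val k (Idx.zero n) * x)
            + (if k = i then (1 : R) else 0) * (D.lam * (σ.val k (Idx.zero n) * x)) := by
      intro k _
      rw [D.bar_sub]
      by_cases h : k = i
      · rw [if_pos h, D.bar_one]
        noncomm_ring
      · rw [if_neg h, D.bar_zero]
        noncomm_ring
    rw [Finset.sum_congr rfl hterm, Finset.sum_add_distrib]
    congr 1
    have : ∀ k ∈ posIdx n, (if k = i then (1 : R) else 0) * (D.lam * (σ.val k (Idx.zero n) * x))
        = (if k = i then D.lam * (σ.val k (Idx.zero n) * x) else 0) := by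
      intro k _
      by_cases h : k = i
      · rw [if_pos h, one_mul, if_pos h]
      · rw [if_neg h, zero_mul, if_neg h]
    rw [Finset.sum_congr rfl this, Finset.sum_ite_eq' (posIdx n) i, if_pos hi]
  have hL : D.lam * (σ.val i (Idx.zero n) * x) ∈ I := by
    have heq : D.lam * (σ.val i (Idx.zero n) * x)
        = (A + B + (E + D.lam * (σ.val i (Idx.zero n) * x))) - A - B - E := by abel
    rw [← hCE] at heq
    rw [heq, hbj]
    exact D.isub hI (D.isub hI (D.isub hI hI.zero_mem hAI) hBI) hEI
  have hfin : σ.val i (Idx.zero n) * x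
      = D.bar D.lam * (D.lam * (σ.val i (Idx.zero n) * x)) := by
    rw [← mul_assoc, D.bar_lam_mul_lam, one_mul]
  rw [hfin]
  exact hI.mul_left _ _ hL

end OddFormRingData
/-- Characterization of membership in the principal congruence subgroup
`U_{2n+1}((R, Δ), (I, Ω))`. -/
theorem statement13 {R : Type*} [Ring R] [Nontrivial R] (D : OddFormRingData R)
    (Δ : Set (R × R)) (hΔ : D.IsFormParam Δ) (n : ℕ)
    (I : Set R) (Ω : Set (R × R)) (hIΩ : D.IsFormIdeal Δ I Ω)
    (σ : GLn R n) (hσ : σ ∈ D.unitary Δ n) :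
    σ ∈ D.principalCongruence Δ I Ω n ↔
      ((∀ i j : Idx n, i.1 ≠ 0 → j.1 ≠ 0 →
          σ.val i j - (if i = j then (1 : R) else 0) ∈ I) ∧
        (∀ j : Idx n, j.1 ≠ 0 → D.qform (fun i => σ.val i j) ∈ Ω) ∧
        ∀ x ∈ JSet Δ,
          D.hSMul (D.hSub (D.qform (fun i => σ.val i (Idx.zero n))) (1, 0)) x ∈ Ω) := by
  have hI := hIΩ.1
  constructor
  · rintro ⟨-, h1, h2⟩
    refine ⟨h1, fun j hj => ?_, fun x hx => ?_⟩
    · have hmem : (Pi.single j (1 : R) : Idx n → R) ∈ MRD Δ n := by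
        show (Pi.single j (1 : R) : Idx n → R) (Idx.zero n) ∈ JSet Δ
        rw [Pi.single_eq_of_ne (Idx.zero_ne hj)]
        exact D.J_zero hΔ
      have hu := h2 (Pi.single j (1 : R)) hmem
      rwa [D.Qeq_col σ j hj 1, D.hSMul_one] at hu
    · have hmem : (Pi.single (Idx.zero n) x : Idx n → R) ∈ MRD Δ n := by
        show (Pi.single (Idx.zero n) x : Idx n → R) (Idx.zero n) ∈ JSet Δ
        rw [Pi.single_eq_same]
        exact hx
      have hu := h2 (Pi.single (Idx.zero n) x) hmem
      rwa [D.Qeq_col0 σ x] at hu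
  · rintro ⟨h1, h2a, h2b⟩
    refine ⟨hσ, h1, ?_⟩
    intro u hu
    have hx : u (Idx.zero n) ∈ JSet Δ := hu
    have claim : ∀ s : Finset (Idx n), ∀ v : Idx n → R, v (Idx.zero n) = 0 →
        (∀ k, k ∉ s → v k = 0) →
        D.hSub (D.qform (σ.val.mulVec v)) (D.qform v) ∈ Ω := by
      intro s
      induction s using Finset.induction_on with
      | empty =>
        intro v hv0 hsupp
        have hv : v = 0 := funext fun k => hsupp k (Finset.notMem_empty k)
        subst hv
        rw [Matrix.mulVec_zero]
        have h0 : D.qform (0 : Idx n → R) = ((0 : R), (0 : R)) := by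
          simp [OddFormRingData.qform, D.bar_zero]
        rw [h0, D.hSub_pair_zero]
        exact D.omega_zero hIΩ
      | @insert j s' hjs ih =>
        intro v hv0 hsupp
        by_cases hj0 : j.1 = 0
        · refine ih v hv0 fun k hk => ?_
          by_cases hkj : k = j
          · subst hkj
            have : k = Idx.zero n := Subtype.ext hj0
            rw [this]; exact hv0
          · exact hsupp k (by simp [Finset.mem_insert, hkj, hk])
        · set a := v j with ha
          set v' : Idx n → R := Function.update v j 0 with hv'
          have hv'0 : v' (Idx.zero n) = 0 := by
            rw [hv', Function.update_of_ne (Idx.zero_ne hj0)]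
            exact hv0
          have hsupp' : ∀ k, k ∉ s' → v' k = 0 := by
            intro k hk
            by_cases hkj : k = j
            · subst hkj; rw [hv', Function.update_self]
            · rw [hv', Function.update_of_ne hkj]
              exact hsupp k (by simp [Finset.mem_insert, hkj, hk])
          have hveq : v = v' + Pi.single j a := funext fun k => by
            by_cases hkj : k = j
            · subst hkj
              simp [hv', Function.update_self, Pi.single_eq_same, ha]
            · simp [hv', Function.update_of_ne hkj, Pi.single_eq_of_ne hkj]
          rw [hveq, Matrix.mulVec_add,
            D.qQuad v' (Pi.single j a) (σ.val.mulVec v') (σ.val.mulVec (Pi.single j a))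
              (hσ.1 v' (Pi.single j a))]
          refine hIΩ.2.add_mem _ (hIΩ.2.add_mem _ (ih v' hv'0 hsupp') _ ?_) _ ?_
          · rw [D.Qeq_col σ j hj0 a]
            exact hIΩ.2.smul_mem _ (h2a j hj0) a
          · apply D.omega_base hIΩ
            rw [hv'0, D.bar_zero, zero_mul, zero_mul, sub_zero, ← Finset.sum_sub_distrib]
            refine D.isum hI _ _ fun k hk => ?_
            have hkpos : 0 < k.1 := mem_posIdx.mp hk
            refine D.prod_sub_mem hI ?_ ?_
            · rw [← D.bar_sub]
              refine hI.bar_mem _ ?_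
              refine D.entry_sum_mem hI σ.val h1 (Pi.single j a) ?_ k (by omega)
              apply Pi.single_eq_of_ne (Idx.zero_ne hj0)
            · exact D.entry_sum_mem hI σ.val h1 v' hv'0 k.neg (Idx.neg_ne_zero (by omega))
    have hQv := claim Finset.univ (fun k => if k = Idx.zero n then 0 else u k) (if_pos rfl)
      (fun k hk => absurd (Finset.mem_univ k) hk)
    have hveq : (fun k => if k = Idx.zero n then 0 else u k) + Pi.single (Idx.zero n) (u (Idx.zero n)) = u := by
      funext k
      by_cases hk : k = Idx.zero n
      · subst hk; simp
      · simp [hk, Pi.single_eq_of_ne hk]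
    rw [← hveq, Matrix.mulVec_add,
      D.qQuad _ _ _ _ (hσ.1 (fun k => if k = Idx.zero n then 0 else u k)
        (Pi.single (Idx.zero n) (u (Idx.zero n))))]
    refine hIΩ.2.add_mem _ (hIΩ.2.add_mem _ hQv _ ?_) _ ?_
    · rw [D.Qeq_col0 σ (u (Idx.zero n))]
      exact h2b _ hx
    · apply D.omega_base hIΩ
      rw [if_pos (rfl : Idx.zero n = Idx.zero n)]
      rw [D.bar_zero, zero_mul, zero_mul, sub_zero]
      have hS2 : (∑ i ∈ posIdx n,
          D.bar ((Pi.single (Idx.zero n) (u (Idx.zero n)) : Idx n → R) i)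
            * (if i.neg = Idx.zero n then (0 : R) else u i.neg)) = 0 :=
        Finset.sum_eq_zero fun k hk => by
          have hkpos : 0 < k.1 := mem_posIdx.mp hk
          rw [Pi.single_eq_of_ne (show k ≠ Idx.zero n from fun h => by
            have := congrArg Subtype.val h; rw [Idx.zero_val] at this; omega)]
          rw [D.bar_zero, zero_mul]
      rw [hS2, sub_zero]
      refine D.isum hI _ _ fun k hk => ?_
      simp only [mulVec_single_col]
      exact hI.mul_right _ _ (hI.bar_mem _
        (D.col_zero_entry_mem hΔ hIΩ σ hσ h1 h2a hx hk))
end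
end

section
/- Let R be a semilocal ring and m ∈ ℕ. If the column (u₁,…,u_{m+1}) ∈ R^{m+1} is left unimodular, then there exists x ∈ R such that the column (u₁ + x·u_{m+1}, u₂, …, u_m) ∈ R^m is left unimodular. -/
open scoped BigOperators

noncomputable section

universe u

section AuxStableRange
open Submodule LinearMap

universe v

section Plumb
variable {S : Type v} [Ring S] {X : Type v} [AddCommGroup X] [Module S X]

noncomputable def supIsoProd {p q : Submodule S X} (h : Disjoint p q) :
    (↥p × ↥q) ≃ₗ[S] ↥(p ⊔ q) := by
  refine LinearEquiv.ofBijective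
    (LinearMap.codRestrict (p ⊔ q) (p.subtype.coprod q.subtype) ?_) ⟨?_, ?_⟩
  · rintro ⟨a, b⟩
    exact add_mem_sup a.2 b.2
  · rintro ⟨a, b⟩ ⟨a', b'⟩ hab
    have heq : (a : X) + b = a' + b' := congrArg Subtype.val hab
    have h2 : (a : X) - a' = b' - b := by
      rw [sub_eq_sub_iff_add_eq_add]; rw [heq]; abel
    have ha : (a : X) - a' ∈ p ⊓ q := by
      constructor
      · exact sub_mem a.2 a'.2
      · rw [h2]; exact sub_mem b'.2 b.2
    rw [h.eq_bot] at ha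
    simp only [Submodule.mem_bot, sub_eq_zero] at ha
    have hb : (b : X) = b' := by
      have : (b' : X) - b = 0 := by rw [← h2, ha, sub_self]
      rw [sub_eq_zero] at this; exact this.symm
    ext <;> simp [ha, hb]
  · rintro ⟨z, hz⟩
    rcases Submodule.mem_sup.mp hz with ⟨a, ha, b, hb, rfl⟩
    exact ⟨⟨⟨a, ha⟩, ⟨b, hb⟩⟩, rfl⟩

theorem compl_inside [IsSemisimpleModule S X] (A B : Submodule S X) :
    ∃ D : Submodule S X, D ≤ B ∧ Disjoint A D ∧ A ⊔ D = A ⊔ B := by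
  obtain ⟨q, hq⟩ := exists_isCompl (Submodule.comap B.subtype A)
  refine ⟨Submodule.map B.subtype q, Submodule.map_subtype_le B q, ?_, ?_⟩
  · rw [disjoint_iff, eq_bot_iff]
    rintro x ⟨hxA, hxD⟩
    rcases hxD with ⟨y, hy, rfl⟩
    have : y ∈ Submodule.comap B.subtype A ⊓ q := ⟨hxA, hy⟩
    rw [hq.inf_eq_bot] at this
    simp only [Submodule.mem_bot] at this
    simp [this]
  · apply le_antisymm
    · exact sup_le_sup_left (Submodule.map_subtype_le B q) A
    · refine sup_le le_sup_left ?_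
      intro b hb
      have : (⟨b, hb⟩ : ↥B) ∈ (Submodule.comap B.subtype A) ⊔ q := by rw [hq.sup_eq_top]; trivial
      rcases Submodule.mem_sup.mp this with ⟨u, hu, w, hw, huw⟩
      have : b = (u : X) + (w : X) := by
        have := congrArg Subtype.val huw; simpa using this.symm
      rw [this]
      exact add_mem_sup hu ⟨w, hw, rfl⟩

end Plumb

section Cancel
variable {S : Type v} [Ring S]
variable {X Y : Type v} [AddCommGroup X] [Module S X] [AddCommGroup Y] [Module S Y]

theorem map_equiv_disjoint (g : X ≃ₗ[S] Y) {p q : Submodule S X} (h : Disjoint p q) :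
    Disjoint (p.map (g : X →ₗ[S] Y)) (q.map (g : X →ₗ[S] Y)) := by
  rw [disjoint_iff, eq_bot_iff]
  rintro x ⟨⟨y, hy, rfl⟩, ⟨z, hz, hzz⟩⟩
  have : z = y := g.injective hzz
  subst this
  have : z ∈ p ⊓ q := ⟨hy, hz⟩
  rw [h.eq_bot] at this
  simp only [Submodule.mem_bot] at this
  simp [this]

theorem cancel_simple [IsSemisimpleModule S X] [IsSemisimpleModule S Y]
    (g : X ≃ₗ[S] Y) (V C : Submodule S X) (hd : Disjoint V C) (hs : V ⊔ C = ⊤)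
    [hVs : IsSimpleModule S ↥V]
    (V' C' : Submodule S Y) (hd' : Disjoint V' C') (hs' : V' ⊔ C' = ⊤)
    [hV's : IsSimpleModule S ↥V'] (e : ↥V ≃ₗ[S] ↥V') :
    Nonempty (↥C ≃ₗ[S] ↥C') := by
  classical
  set W : Submodule S Y := V.map (g : X →ₗ[S] Y) with hW
  have eW : ↥V ≃ₗ[S] ↥W := g.submoduleMap V
  have hWs : IsSimpleModule S ↥W := IsSimpleModule.congr eW.symm
  set U : Submodule S X := V'.map (g.symm : Y →ₗ[S] X) with hU
  have eU : ↥V' ≃ₗ[S] ↥U := g.symm.submoduleMap V'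
  have hUs : IsSimpleModule S ↥U := IsSimpleModule.congr eU.symm
  by_cases hWC : Disjoint W C'
  · -- W ⊕ C' = ⊤, then C' ≅ Y/W ≅ X/V ≅ C
    have hWbot : W ≠ ⊥ := by
      haveI := IsSimpleModule.nontrivial S ↥V
      haveI : Nontrivial ↥W := eW.symm.toEquiv.nontrivial
      exact Submodule.nontrivial_iff_ne_bot.mp this
    have hsup : W ⊔ C' = ⊤ := by
      have hsimp : IsSimpleModule S (Y ⧸ C') :=
        IsSimpleModule.congr (C'.quotientEquivOfIsCompl V' ⟨hd'.symm, codisjoint_iff.mpr (by rw [sup_comm]; exact hs')⟩)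
      have hne : W.map C'.mkQ ≠ ⊥ := by
        intro hbot
        apply hWbot
        rw [eq_bot_iff]
        intro w hw
        have : C'.mkQ w = 0 := by
          have : C'.mkQ w ∈ W.map C'.mkQ := ⟨w, hw, rfl⟩
          rw [hbot] at this; simpa using this
        have hwC : w ∈ C' := by rwa [← Submodule.Quotient.mk_eq_zero]
        have : w ∈ W ⊓ C' := ⟨hw, hwC⟩
        rw [hWC.eq_bot] at this; exact this
      have : W.map C'.mkQ = ⊤ := hsimp.1.eq_bot_or_eq_top _ |>.resolve_left hne
      have := (Submodule.map_mkQ_eq_top _ _).mp this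
      rw [sup_comm] at this; exact this
    have e1 : ↥C ≃ₗ[S] X ⧸ V := (V.quotientEquivOfIsCompl C ⟨hd, codisjoint_iff.mpr hs⟩).symm
    have e2 : (X ⧸ V) ≃ₗ[S] Y ⧸ W := Submodule.Quotient.equiv V W g rfl
    have e3 : (Y ⧸ W) ≃ₗ[S] ↥C' := W.quotientEquivOfIsCompl C' ⟨hWC, codisjoint_iff.mpr hsup⟩
    exact ⟨e1.trans (e2.trans e3)⟩
  · by_cases hUC : Disjoint U C
    · have hUbot : U ≠ ⊥ := by
        haveI := IsSimpleModule.nontrivial S ↥V'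
        haveI : Nontrivial ↥U := eU.symm.toEquiv.nontrivial
        exact Submodule.nontrivial_iff_ne_bot.mp this
      have hsup : U ⊔ C = ⊤ := by
        have hsimp : IsSimpleModule S (X ⧸ C) :=
          IsSimpleModule.congr (C.quotientEquivOfIsCompl V ⟨hd.symm, codisjoint_iff.mpr (by rw [sup_comm]; exact hs)⟩)
        have hne : U.map C.mkQ ≠ ⊥ := by
          intro hbot
          apply hUbot
          rw [eq_bot_iff]
          intro w hw
          have : C.mkQ w = 0 := by
            have : C.mkQ w ∈ U.map C.mkQ := ⟨w, hw, rfl⟩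
            rw [hbot] at this; simpa using this
          have hwC : w ∈ C := by rwa [← Submodule.Quotient.mk_eq_zero]
          have : w ∈ U ⊓ C := ⟨hw, hwC⟩
          rw [hUC.eq_bot] at this; exact this
        have : U.map C.mkQ = ⊤ := hsimp.1.eq_bot_or_eq_top _ |>.resolve_left hne
        have := (Submodule.map_mkQ_eq_top _ _).mp this
        rw [sup_comm] at this; exact this
      have e1 : ↥C ≃ₗ[S] X ⧸ U := (U.quotientEquivOfIsCompl C ⟨hUC, codisjoint_iff.mpr hsup⟩).symm
      have e2 : (X ⧸ U) ≃ₗ[S] Y ⧸ V' := (Submodule.Quotient.equiv V' U g.symm rfl).symm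
      have e3 : (Y ⧸ V') ≃ₗ[S] ↥C' := V'.quotientEquivOfIsCompl C' ⟨hd', codisjoint_iff.mpr hs'⟩
      exact ⟨e1.trans (e2.trans e3)⟩
    · -- W ≤ C' and U ≤ C
      have hWle : W ≤ C' := by
        rcases hWs.1.eq_bot_or_eq_top (Submodule.comap W.subtype (W ⊓ C')) with h0 | h1
        · exfalso; apply hWC; rw [disjoint_iff, eq_bot_iff]
          intro x hx
          have : (⟨x, hx.1⟩ : ↥W) ∈ Submodule.comap W.subtype (W ⊓ C') := hx
          rw [h0] at this
          simpa using congrArg Subtype.val (show (⟨x, hx.1⟩ : ↥W) = 0 from this)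
        · intro x hx
          have : (⟨x, hx⟩ : ↥W) ∈ Submodule.comap W.subtype (W ⊓ C') := by rw [h1]; trivial
          exact this.2
      have hUle : U ≤ C := by
        rcases hUs.1.eq_bot_or_eq_top (Submodule.comap U.subtype (U ⊓ C)) with h0 | h1
        · exfalso; apply hUC; rw [disjoint_iff, eq_bot_iff]
          intro x hx
          have : (⟨x, hx.1⟩ : ↥U) ∈ Submodule.comap U.subtype (U ⊓ C) := hx
          rw [h0] at this
          simpa using congrArg Subtype.val (show (⟨x, hx.1⟩ : ↥U) = 0 from this)
        · intro x hx
          have : (⟨x, hx⟩ : ↥U) ∈ Submodule.comap U.subtype (U ⊓ C) := by rw [h1]; trivial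
          exact this.2
      obtain ⟨C₀, hC₀le, hC₀disj, hC₀sup⟩ := compl_inside U C
      rw [sup_eq_right.mpr hUle] at hC₀sup
      -- C = U ⊔ C₀
      have hVC₀ : Disjoint V C₀ := hd.mono_right hC₀le
      have hUVC₀ : Disjoint U (V ⊔ C₀) := by
        rw [disjoint_iff, eq_bot_iff]
        intro x hx
        have h1 : x ∈ (V ⊔ C₀) ⊓ C := ⟨hx.2, hUle hx.1⟩
        have h2 : (V ⊔ C₀) ⊓ C = C₀ := by
          rw [sup_comm V C₀, sup_inf_assoc_of_le _ hC₀le, hd.eq_bot, sup_bot_eq]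
        rw [h2] at h1
        have : x ∈ U ⊓ C₀ := ⟨hx.1, h1⟩
        rw [hC₀disj.eq_bot] at this; exact this
      have hUVC₀sup : U ⊔ (V ⊔ C₀) = ⊤ := by
        have hre : U ⊔ (V ⊔ C₀) = V ⊔ (U ⊔ C₀) := by
          rw [← sup_assoc, ← sup_assoc, sup_comm U V]
        rw [hre, hC₀sup, hs]
      have e1 : ↥C' ≃ₗ[S] Y ⧸ V' := (V'.quotientEquivOfIsCompl C' ⟨hd', codisjoint_iff.mpr hs'⟩).symm
      have e2 : (Y ⧸ V') ≃ₗ[S] X ⧸ U := Submodule.Quotient.equiv V' U g.symm rfl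
      have e3 : (X ⧸ U) ≃ₗ[S] ↥(V ⊔ C₀) :=
        U.quotientEquivOfIsCompl (V ⊔ C₀) ⟨hUVC₀, codisjoint_iff.mpr hUVC₀sup⟩
      have e4 : ↥(V ⊔ C₀) ≃ₗ[S] (↥V × ↥C₀) := (supIsoProd hVC₀).symm
      have e5 : (↥V × ↥C₀) ≃ₗ[S] (↥U × ↥C₀) := (e.trans eU).prodCongr (LinearEquiv.refl S ↥C₀)
      have e6 : (↥U × ↥C₀) ≃ₗ[S] ↥(U ⊔ C₀) := supIsoProd hC₀disj
      have e7 : ↥(U ⊔ C₀) ≃ₗ[S] ↥C := by rw [hC₀sup]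
      exact ⟨(e1.trans (e2.trans (e3.trans (e4.trans (e5.trans (e6.trans e7)))))).symm⟩

end Cancel

section CancelGen
variable {S : Type v} [Ring S]

theorem map_map_symm {X Y : Type v} [AddCommGroup X] [Module S X] [AddCommGroup Y] [Module S Y]
    (e : X ≃ₗ[S] Y) (p : Submodule S Y) :
    (p.map (e.symm : Y →ₗ[S] X)).map (e : X →ₗ[S] Y) = p := by
  ext x
  constructor
  · rintro ⟨y, ⟨z, hz, rfl⟩, rfl⟩; simpa using hz
  · intro hx; exact ⟨e.symm x, ⟨x, hx, rfl⟩, by simp⟩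

theorem cancel_general {T : Type v} [AddCommGroup T] [Module S T] (hT : IsFiniteLength S T) :
    ∀ {X Y : Type v} [AddCommGroup X] [Module S X] [AddCommGroup Y] [Module S Y],
    ∀ [IsSemisimpleModule S X] [IsSemisimpleModule S Y],
    ∀ (_ : X ≃ₗ[S] Y) (A B : Submodule S X), Disjoint A B → A ⊔ B = ⊤ →
    ∀ (A' B' : Submodule S Y), Disjoint A' B' → A' ⊔ B' = ⊤ →
    (↥A ≃ₗ[S] T) → (↥A' ≃ₗ[S] T) → Nonempty (↥B ≃ₗ[S] ↥B') := by
  induction hT with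
  | @of_subsingleton M _ _ _ =>
    intro X Y _ _ _ _ _ _ g A B hABd hABs A' B' hA'd hA's eA eA'
    have hA : A = ⊥ := by
      haveI : Subsingleton ↥A := eA.toEquiv.subsingleton
      rw [eq_bot_iff]; intro x hx
      have : (⟨x, hx⟩ : ↥A) = 0 := Subsingleton.elim _ _
      simpa using congrArg Subtype.val this
    have hA' : A' = ⊥ := by
      haveI : Subsingleton ↥A' := eA'.toEquiv.subsingleton
      rw [eq_bot_iff]; intro x hx
      have : (⟨x, hx⟩ : ↥A') = 0 := Subsingleton.elim _ _
      simpa using congrArg Subtype.val this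
    have hB : B = ⊤ := by rw [hA, bot_sup_eq] at hABs; exact hABs
    have hB' : B' = ⊤ := by rw [hA', bot_sup_eq] at hA's; exact hA's
    exact ⟨(LinearEquiv.ofEq B ⊤ hB).trans <| Submodule.topEquiv.trans <|
      g.trans <| Submodule.topEquiv.symm.trans (LinearEquiv.ofEq ⊤ B' hB'.symm)⟩
  | @of_simple_quotient M _ _ N _ hN ih =>
    intro X Y _ _ _ _ _ _ g A B hABd hABs A' B' hA'd hA's eA eA'
    classical
    -- decompose A
    let NA : Submodule S ↥A := N.map (eA.symm : M →ₗ[S] ↥A)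
    have eNA : ↥N ≃ₗ[S] ↥NA := eA.symm.submoduleMap N
    obtain ⟨VA, hVA⟩ := exists_isCompl NA
    have eVAq : ↥VA ≃ₗ[S] (M ⧸ N) :=
      ((NA.quotientEquivOfIsCompl VA hVA).symm.trans
        (Submodule.Quotient.equiv NA N eA (map_map_symm eA N)))
    set NX : Submodule S X := NA.map A.subtype with hNXdef
    set VX : Submodule S X := VA.map A.subtype with hVXdef
    have hNXle : NX ≤ A := Submodule.map_subtype_le A NA
    have hVXle : VX ≤ A := Submodule.map_subtype_le A VA
    have hNVX : NX ⊔ VX = A := by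
      rw [hNXdef, hVXdef, ← Submodule.map_sup, hVA.sup_eq_top, Submodule.map_top,
        Submodule.range_subtype]
    have hNVXd : Disjoint NX VX := by
      rw [disjoint_iff, hNXdef, hVXdef, ← Submodule.map_inf _ (Submodule.injective_subtype A),
        hVA.inf_eq_bot, Submodule.map_bot]
    have eNX : ↥NX ≃ₗ[S] ↥NA := (Submodule.equivMapOfInjective _ (Submodule.injective_subtype A) NA).symm
    have eVX : ↥VX ≃ₗ[S] ↥VA := (Submodule.equivMapOfInjective _ (Submodule.injective_subtype A) VA).symm
    -- decompose A'
    let NA' : Submodule S ↥A' := N.map (eA'.symm : M →ₗ[S] ↥A')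
    have eNA' : ↥N ≃ₗ[S] ↥NA' := eA'.symm.submoduleMap N
    obtain ⟨VA', hVA'⟩ := exists_isCompl NA'
    have eVAq' : ↥VA' ≃ₗ[S] (M ⧸ N) :=
      ((NA'.quotientEquivOfIsCompl VA' hVA').symm.trans
        (Submodule.Quotient.equiv NA' N eA' (map_map_symm eA' N)))
    set NX' : Submodule S Y := NA'.map A'.subtype with hNXdef'
    set VX' : Submodule S Y := VA'.map A'.subtype with hVXdef'
    have hNXle' : NX' ≤ A' := Submodule.map_subtype_le A' NA'
    have hVXle' : VX' ≤ A' := Submodule.map_subtype_le A' VA'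
    have hNVX' : NX' ⊔ VX' = A' := by
      rw [hNXdef', hVXdef', ← Submodule.map_sup, hVA'.sup_eq_top, Submodule.map_top,
        Submodule.range_subtype]
    have hNVXd' : Disjoint NX' VX' := by
      rw [disjoint_iff, hNXdef', hVXdef', ← Submodule.map_inf _ (Submodule.injective_subtype A'),
        hVA'.inf_eq_bot, Submodule.map_bot]
    have eNX' : ↥NX' ≃ₗ[S] ↥NA' := (Submodule.equivMapOfInjective _ (Submodule.injective_subtype A') NA').symm
    have eVX' : ↥VX' ≃ₗ[S] ↥VA' := (Submodule.equivMapOfInjective _ (Submodule.injective_subtype A') VA').symm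
    -- simple cancellation on VX vs VX'
    haveI hsimpVX : IsSimpleModule S ↥VX := IsSimpleModule.congr (eVX.trans eVAq)
    haveI hsimpVX' : IsSimpleModule S ↥VX' := IsSimpleModule.congr (eVX'.trans eVAq')
    have hdisjC : Disjoint VX (NX ⊔ B) := by
      rw [disjoint_iff, eq_bot_iff]
      intro x hx
      have h1 : x ∈ (NX ⊔ B) ⊓ A := ⟨hx.2, hVXle hx.1⟩
      rw [sup_inf_assoc_of_le _ hNXle, hABd.symm.eq_bot, sup_bot_eq] at h1
      have : x ∈ VX ⊓ NX := ⟨hx.1, h1⟩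
      rw [hNVXd.symm.eq_bot] at this
      exact this
    have hsupC : VX ⊔ (NX ⊔ B) = ⊤ := by
      rw [← sup_assoc, sup_comm VX NX, hNVX, hABs]
    have hdisjC' : Disjoint VX' (NX' ⊔ B') := by
      rw [disjoint_iff, eq_bot_iff]
      intro x hx
      have h1 : x ∈ (NX' ⊔ B') ⊓ A' := ⟨hx.2, hVXle' hx.1⟩
      rw [sup_inf_assoc_of_le _ hNXle', hA'd.symm.eq_bot, sup_bot_eq] at h1
      have : x ∈ VX' ⊓ NX' := ⟨hx.1, h1⟩
      rw [hNVXd'.symm.eq_bot] at this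
      exact this
    have hsupC' : VX' ⊔ (NX' ⊔ B') = ⊤ := by
      rw [← sup_assoc, sup_comm VX' NX', hNVX', hA's]
    obtain ⟨gC⟩ := cancel_simple g VX (NX ⊔ B) hdisjC hsupC VX' (NX' ⊔ B') hdisjC' hsupC'
      (eVX.trans (eVAq.trans (eVAq'.symm.trans eVX'.symm)))
    -- now apply IH inside Z := NX ⊔ B
    set Z : Submodule S X := NX ⊔ B with hZdef
    set Z' : Submodule S Y := NX' ⊔ B' with hZdef'
    let A₂ : Submodule S ↥Z := NX.comap Z.subtype
    let B₂ : Submodule S ↥Z := B.comap Z.subtype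
    let A₂' : Submodule S ↥Z' := NX'.comap Z'.subtype
    let B₂' : Submodule S ↥Z' := B'.comap Z'.subtype
    have hd₂ : Disjoint A₂ B₂ := by
      rw [disjoint_iff, eq_bot_iff]
      intro z hz
      have : (z : X) ∈ NX ⊓ B := ⟨hz.1, hz.2⟩
      have h2 : (z : X) ∈ A ⊓ B := ⟨hNXle this.1, this.2⟩
      rw [hABd.eq_bot] at h2
      simp only [Submodule.mem_bot] at h2 ⊢
      exact Subtype.ext h2
    have hs₂ : A₂ ⊔ B₂ = ⊤ := by
      rw [eq_top_iff]
      rintro ⟨z, hz⟩ -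
      rcases Submodule.mem_sup.mp hz with ⟨n, hn, b, hb, rfl⟩
      have hnZ : n ∈ Z := le_sup_left (α := Submodule S X) hn
      have hbZ : b ∈ Z := le_sup_right (α := Submodule S X) hb
      apply Submodule.mem_sup.mpr
      exact ⟨⟨n, hnZ⟩, hn, ⟨b, hbZ⟩, hb, rfl⟩
    have hd₂' : Disjoint A₂' B₂' := by
      rw [disjoint_iff, eq_bot_iff]
      intro z hz
      have : (z : Y) ∈ NX' ⊓ B' := ⟨hz.1, hz.2⟩
      have h2 : (z : Y) ∈ A' ⊓ B' := ⟨hNXle' this.1, this.2⟩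
      rw [hA'd.eq_bot] at h2
      simp only [Submodule.mem_bot] at h2 ⊢
      exact Subtype.ext h2
    have hs₂' : A₂' ⊔ B₂' = ⊤ := by
      rw [eq_top_iff]
      rintro ⟨z, hz⟩ -
      rcases Submodule.mem_sup.mp hz with ⟨n, hn, b, hb, rfl⟩
      have hnZ : n ∈ Z' := le_sup_left (α := Submodule S Y) hn
      have hbZ : b ∈ Z' := le_sup_right (α := Submodule S Y) hb
      apply Submodule.mem_sup.mpr
      exact ⟨⟨n, hnZ⟩, hn, ⟨b, hbZ⟩, hb, rfl⟩
    have eA₂ : ↥A₂ ≃ₗ[S] ↥N :=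
      (Submodule.comapSubtypeEquivOfLe (le_sup_left : NX ≤ Z)).trans
        (eNX.trans (eNA.symm))
    have eA₂' : ↥A₂' ≃ₗ[S] ↥N :=
      (Submodule.comapSubtypeEquivOfLe (le_sup_left : NX' ≤ Z')).trans
        (eNX'.trans (eNA'.symm))
    obtain ⟨gB⟩ := ih gC A₂ B₂ hd₂ hs₂ A₂' B₂' hd₂' hs₂' eA₂ eA₂'
    exact ⟨((Submodule.comapSubtypeEquivOfLe (le_sup_right : B ≤ Z)).symm.trans gB).trans
      (Submodule.comapSubtypeEquivOfLe (le_sup_right : B' ≤ Z'))⟩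

end CancelGen

section MainSS
variable {S : Type v} [Ring S]

theorem main_semisimple [IsSemisimpleRing S] (a b : S) (Kb : Submodule S S)
    (h : Submodule.span S {a} ⊔ (Submodule.span S {b} ⊔ Kb) = ⊤) :
    ∃ x : S, Submodule.span S {a + x * b} ⊔ Kb = ⊤ := by
  classical
  set M := S ⧸ Kb with hM
  set π := Kb.mkQ with hπ
  set φ := LinearMap.toSpanSingleton S M (π a) with hφ
  set ψ := LinearMap.toSpanSingleton S M (π b) with hψ
  have hKbbot : Submodule.map π Kb = ⊥ := by
    rw [eq_bot_iff]
    rintro z ⟨y, hy, rfl⟩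
    show π y ∈ (⊥ : Submodule S M)
    rw [Submodule.mem_bot, hπ, Submodule.mkQ_apply, Submodule.Quotient.mk_eq_zero]
    exact hy
  have hstop : LinearMap.range φ ⊔ LinearMap.range ψ = ⊤ := by
    have h2 := congrArg (Submodule.map π) h
    rw [Submodule.map_sup, Submodule.map_sup, Submodule.map_span, Submodule.map_span,
      Set.image_singleton, Set.image_singleton, hKbbot, sup_bot_eq, Submodule.map_top,
      Submodule.range_mkQ] at h2
    rw [hφ, hψ, ← LinearMap.span_singleton_eq_range, ← LinearMap.span_singleton_eq_range]
    exact h2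
  obtain ⟨K', hK⟩ := exists_isCompl (LinearMap.ker φ)
  obtain ⟨D, hDle, hDdisj, hDsup⟩ := compl_inside (LinearMap.range φ) (LinearMap.range ψ)
  rw [hstop] at hDsup
  -- K' ≅ range φ
  have eK' : ↥K' ≃ₗ[S] ↥(LinearMap.range φ) :=
    ((LinearMap.ker φ).quotientEquivOfIsCompl K' hK).symm.trans φ.quotKerEquivRange
  -- finite length of range φ
  have hfl : IsFiniteLength S ↥(LinearMap.range φ) :=
    isFiniteLength_iff_isNoetherian_isArtinian.mpr ⟨inferInstance, inferInstance⟩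
  -- product decomposition of S realizing range φ ⊕ (Kb × D)
  obtain ⟨P, hP⟩ := exists_isCompl Kb
  have eP : M ≃ₗ[S] ↥P := Kb.quotientEquivOfIsCompl P hP
  have gY : S ≃ₗ[S] (↥Kb × M) :=
    (Submodule.prodEquivOfIsCompl Kb P hP).symm.trans
      ((LinearEquiv.refl S ↥Kb).prodCongr eP.symm)
  set A2 : Submodule S (↥Kb × M) := (⊥ : Submodule S ↥Kb).prod (LinearMap.range φ) with hA2
  set B2 : Submodule S (↥Kb × M) := (⊤ : Submodule S ↥Kb).prod D with hB2
  have hd2 : Disjoint A2 B2 := by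
    rw [disjoint_iff, eq_bot_iff]
    rintro ⟨k, m⟩ ⟨h1, h2⟩
    have hk : k = 0 := by simpa using h1.1
    have hm : m ∈ LinearMap.range φ ⊓ D := ⟨h1.2, h2.2⟩
    rw [hDdisj.eq_bot] at hm
    simp only [Submodule.mem_bot] at hm ⊢
    exact Prod.ext hk hm
  have hs2 : A2 ⊔ B2 = ⊤ := by
    rw [eq_top_iff]
    rintro ⟨k, m⟩ -
    have : m ∈ LinearMap.range φ ⊔ D := by rw [hDsup]; trivial
    rcases Submodule.mem_sup.mp this with ⟨u, hu, v, hv, rfl⟩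
    apply Submodule.mem_sup.mpr
    refine ⟨(0, u), ⟨Submodule.zero_mem _, hu⟩, (k, v), ⟨trivial, hv⟩, ?_⟩
    ext <;> simp
  have eA2 : ↥A2 ≃ₗ[S] ↥(LinearMap.range φ) :=
    { toFun := fun z => ⟨z.1.2, z.2.2⟩
      map_add' := fun _ _ => rfl
      map_smul' := fun _ _ => rfl
      invFun := fun u => ⟨(0, u.1), ⟨Submodule.zero_mem _, u.2⟩⟩
      left_inv := fun z => by
        apply Subtype.ext
        apply Prod.ext
        · have : z.1.1 ∈ (⊥ : Submodule S ↥Kb) := z.2.1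
          simpa using this.symm
        · rfl
      right_inv := fun u => rfl }
  have eB2 : ↥B2 ≃ₗ[S] (↥Kb × ↥D) :=
    { toFun := fun z => (z.1.1, ⟨z.1.2, z.2.2⟩)
      map_add' := fun _ _ => rfl
      map_smul' := fun _ _ => rfl
      invFun := fun u => ⟨(u.1, u.2), ⟨trivial, u.2.2⟩⟩
      left_inv := fun z => rfl
      right_inv := fun u => rfl }
  obtain ⟨θiso⟩ := cancel_general hfl gY K' (LinearMap.ker φ) hK.disjoint.symm
    (by rw [sup_comm]; exact hK.sup_eq_top) A2 B2 hd2 hs2 eK' eA2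
  set θ : ↥(LinearMap.ker φ) →ₗ[S] ↥D :=
    (LinearMap.snd S ↥Kb ↥D).comp ((θiso.trans eB2) : ↥(LinearMap.ker φ) →ₗ[S] (↥Kb × ↥D)) with hθ
  have hθsurj : Function.Surjective θ := by
    intro d
    refine ⟨(θiso.trans eB2).symm (0, d), ?_⟩
    simp [hθ]
  -- splitting of ψ
  obtain ⟨Q, hQ⟩ := exists_isCompl (LinearMap.ker ψ)
  set eQ : ↥Q ≃ₗ[S] ↥(LinearMap.range ψ) :=
    ((LinearMap.ker ψ).quotientEquivOfIsCompl Q hQ).symm.trans ψ.quotKerEquivRange with heQdef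
  have heQ : ∀ q : ↥Q, ψ (q : S) = ((eQ q) : M) := by
    intro q
    have h1 : ((LinearMap.ker ψ).quotientEquivOfIsCompl Q hQ).symm q
        = Submodule.Quotient.mk (q : S) :=
      Submodule.quotientEquivOfIsCompl_symm_apply _ _ _ q
    have h2 : eQ q = ψ.quotKerEquivRange
        (((LinearMap.ker ψ).quotientEquivOfIsCompl Q hQ).symm q) := by
      rw [heQdef, LinearEquiv.trans_apply]
    rw [h2, h1]
    exact (ψ.quotKerEquivRange_apply_mk _).symm
  set lift : ↥D →ₗ[S] S :=
    Q.subtype.comp ((eQ.symm : ↥(LinearMap.range ψ) →ₗ[S] ↥Q).comp (Submodule.inclusion hDle)) with hliftdef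
  have hlift : ∀ d : ↥D, ψ (lift d) = (d : M) := by
    intro d
    have := heQ (eQ.symm (Submodule.inclusion hDle d))
    rw [LinearEquiv.apply_symm_apply] at this
    simpa [hliftdef] using this
  set prK := Submodule.linearProjOfIsCompl (LinearMap.ker φ) K' hK with hprK
  set ξ : S →ₗ[S] S := lift.comp (θ.comp prK) with hξ
  set x := ξ 1 with hx
  have hxi : ∀ s : S, ξ s = s * x := by
    intro s
    have : ξ (s • (1 : S)) = s • ξ 1 := map_smul ξ s 1
    simpa [smul_eq_mul] using this
  refine ⟨x, ?_⟩
  set c := a + x * b with hc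
  have hm : ∀ m : M, ∃ s : S, π (s * c) = m := by
    intro m
    have hmem : m ∈ LinearMap.range φ ⊔ D := by rw [hDsup]; trivial
    rcases Submodule.mem_sup.mp hmem with ⟨u, hu, v, hv, rfl⟩
    rcases hu with ⟨s', hs'⟩
    rcases hθsurj ⟨v, hv⟩ with ⟨k, hk⟩
    have hs'mem : s' ∈ LinearMap.ker φ ⊔ K' := by rw [hK.sup_eq_top]; trivial
    rcases Submodule.mem_sup.mp hs'mem with ⟨κ, hκ, κ', hκ', hκκ'⟩
    refine ⟨κ' + (k : S), ?_⟩
    have hsplit : (κ' + (k : S)) * c = (κ' + (k : S)) * a + ((κ' + (k : S)) * x) * b := by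
      rw [hc, mul_add, ← mul_assoc]
    have hπa : π ((κ' + (k : S)) * a) = φ (κ' + (k : S)) :=
      (map_smul π (κ' + (k : S)) a).symm
    have hπb : π (((κ' + (k : S)) * x) * b) = ψ (ξ (κ' + (k : S))) := by
      rw [hxi]
      exact (map_smul π ((κ' + (k : S)) * x) b).symm
    have hφval : φ (κ' + (k : S)) = u := by
      have h1 : φ (κ' + (k : S)) = φ κ' + φ (k : S) := map_add φ _ _
      have h2 : φ (k : S) = 0 := LinearMap.mem_ker.mp k.2
      have h3 : φ κ' = u := by
        have : φ s' = φ κ + φ κ' := by rw [← hκκ']; exact map_add φ _ _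
        rw [hs'] at this
        have hκ0 : φ κ = 0 := LinearMap.mem_ker.mp hκ
        rw [hκ0, zero_add] at this
        exact this.symm
      rw [h1, h2, h3, add_zero]
    have hψval : ψ (ξ (κ' + (k : S))) = v := by
      rw [hξ]
      have hpr : prK (κ' + (k : S)) = k := by
        have h1 : prK κ' = 0 := Submodule.linearProjOfIsCompl_apply_right' hK (x := κ') hκ'
        have h2 : prK (k : S) = k := Submodule.linearProjOfIsCompl_apply_left hK k
        rw [map_add, h1, h2, zero_add]
      simp only [LinearMap.comp_apply]
      rw [hpr, hk, hlift]
    calc π ((κ' + (k : S)) * c) = π ((κ' + (k : S)) * a) + π (((κ' + (k : S)) * x) * b) := by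
          rw [hsplit, map_add]
      _ = u + v := by rw [hπa, hπb, hφval, hψval]
  rw [eq_top_iff]
  intro z _
  obtain ⟨s, hs⟩ := hm (π z)
  have hdiff : z - s * c ∈ Kb := by
    have : π (z - s * c) = 0 := by rw [map_sub, hs, sub_self]
    rwa [hπ, Submodule.mkQ_apply, Submodule.Quotient.mk_eq_zero] at this
  have hz : z = s * c + (z - s * c) := by abel
  rw [hz]
  refine Submodule.add_mem_sup ?_ hdiff
  have := Submodule.smul_mem (Submodule.span S {c}) s (Submodule.mem_span_singleton_self c)
  rwa [smul_eq_mul] at this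

end MainSS


section Jac
variable {R : Type v} [Ring R]

theorem jac_mul_right {x : R} (hx : x ∈ jacobsonRadical R) (r : R) :
    x * r ∈ jacobsonRadical R := by
  rw [jacobsonRadical, Submodule.mem_sInf] at hx ⊢
  intro m hm
  haveI : IsSimpleModule R (R ⧸ m) := isSimpleModule_iff_isCoatom.mpr (Ideal.isMaximal_def.mp hm)
  set f : R →ₗ[R] R ⧸ m := m.mkQ.comp (LinearMap.toSpanSingleton R R r) with hf
  have hfx : ∀ y : R, f y = Submodule.Quotient.mk (y * r) := by
    intro y
    simp [hf, LinearMap.toSpanSingleton_apply, smul_eq_mul]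
  rcases f.surjective_or_eq_zero with hsurj | hzero
  · have hker2 : Ideal.IsMaximal (LinearMap.ker f) :=
      Ideal.isMaximal_def.mpr (LinearMap.isCoatom_ker_of_surjective hsurj)
    have hxk : x ∈ LinearMap.ker f := hx _ hker2
    have : f x = 0 := LinearMap.mem_ker.mp hxk
    rw [hfx x] at this
    rwa [Submodule.Quotient.mk_eq_zero] at this
  · have : f x = 0 := by rw [hzero]; rfl
    rw [hfx x] at this
    rwa [Submodule.Quotient.mk_eq_zero] at this

theorem nakayama_top [Nontrivial R] {L : Ideal R} (h : L ⊔ jacobsonRadical R = ⊤) :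
    L = ⊤ := by
  by_contra hL
  obtain ⟨mI, hmax, hle⟩ := Ideal.exists_le_maximal L hL
  have hJ : jacobsonRadical R ≤ mI := sInf_le hmax
  have h2 : L ⊔ jacobsonRadical R ≤ mI := sup_le hle hJ
  rw [h] at h2
  exact hmax.ne_top (top_le_iff.mp h2)

end Jac


end AuxStableRange

/-- Shortening of left unimodular columns over a semilocal ring. -/
theorem statement17 {R : Type*} [Ring R] [Nontrivial R] (hsl : IsSemilocalRing R)
    (m : ℕ) (hm : 1 ≤ m) (u : Fin (m + 1) → R)
    (hu : ∃ v : Fin (m + 1) → R, ∑ i, v i * u i = 1) :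
    ∃ x : R, ∃ v : Fin m → R,
      ∑ i, v i * (u i.castSucc + if (i : ℕ) = 0 then x * u (Fin.last m) else 0) = 1 := by
  classical
  obtain ⟨v, hv⟩ := hu
  set J := jacobsonRadical R with hJdef
  set I2 : TwoSidedIdeal R := TwoSidedIdeal.mk' (J : Set R)
    (Submodule.zero_mem J)
    (fun hx hy => Submodule.add_mem J hx hy)
    (fun hx => Submodule.neg_mem J hx)
    (fun {r y} hy => by simpa [smul_eq_mul] using Submodule.smul_mem J r hy)
    (fun {y r} hy => jac_mul_right hy r) with hI2
  set S := I2.ringCon.Quotient with hS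
  set σ : R →+* S := I2.ringCon.mk' with hσ
  have hσsurj : Function.Surjective σ := fun y => Quot.inductionOn y fun r => ⟨r, rfl⟩
  have hker : ∀ r : R, σ r = 0 ↔ r ∈ J := by
    intro r
    have h0 : (0 : S) = σ 0 := (map_zero σ).symm
    rw [h0]
    show (Quotient.mk'' r : S) = Quotient.mk'' 0 ↔ _
    rw [show ((Quotient.mk'' r : S) = Quotient.mk'' 0 ↔ I2.ringCon r 0) from RingCon.eq _]
    rw [TwoSidedIdeal.rel_iff, sub_zero, hI2]
    exact TwoSidedIdeal.mem_mk' _ _ _ _ _ _ r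
  -- transfer semisimplicity
  haveI : RingHomSurjective σ := ⟨hσsurj⟩
  let τf : R →ₛₗ[σ] S :=
    { toFun := fun r => σ r
      map_add' := fun r s => map_add σ r s
      map_smul' := fun r s => by simp [smul_eq_mul, map_mul] }
  have hkertau : J ≤ LinearMap.ker τf := by
    intro r hr
    exact LinearMap.mem_ker.mpr ((hker r).mpr hr)
  let l := J.liftQ τf hkertau
  have hlbij : Function.Bijective l := by
    constructor
    · intro q1 q2 hq
      obtain ⟨r1, rfl⟩ := Submodule.Quotient.mk_surjective J q1
      obtain ⟨r2, rfl⟩ := Submodule.Quotient.mk_surjective J q2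
      have h1 : σ r1 = σ r2 := by
        exact hq
      have h2 : r1 - r2 ∈ J := by
        rw [← hker]
        rw [map_sub, h1, sub_self]
      exact (Submodule.Quotient.eq J).mpr h2
    · intro s
      obtain ⟨r, rfl⟩ := hσsurj s
      exact ⟨Submodule.Quotient.mk r, rfl⟩
  haveI hSS : IsSemisimpleRing S := (LinearMap.isSemisimpleModule_iff_of_bijective l hlbij).mp hsl
  -- set up elements
  have h0m : 0 < m := hm
  set i0 : Fin m := ⟨0, h0m⟩ with hi0
  set aS : S := σ (u (Fin.castSucc i0)) with haS
  set bS : S := σ (u (Fin.last m)) with hbS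
  set Kb : Submodule S S :=
    Submodule.span S ((fun i : Fin m => σ (u (Fin.castSucc i))) '' {i | i ≠ i0}) with hKb
  have hhyp : Submodule.span S {aS} ⊔ (Submodule.span S {bS} ⊔ Kb) = ⊤ := by
    rw [eq_top_iff]
    intro z _
    have h1 : (1 : S) ∈ Submodule.span S {aS} ⊔ (Submodule.span S {bS} ⊔ Kb) := by
      have hs1 : σ (∑ i, v i * u i) = 1 := by rw [hv, map_one]
      rw [map_sum] at hs1
      have hs2 : ∑ i, σ (v i) * σ (u i) = 1 := by
        rw [← hs1]
        exact Finset.sum_congr rfl fun i _ => (map_mul σ _ _).symm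
      rw [← hs2]
      apply Submodule.sum_mem
      intro i _
      have hui : σ (u i) ∈ Submodule.span S {aS} ⊔ (Submodule.span S {bS} ⊔ Kb) := by
        induction i using Fin.lastCases with
        | last =>
          apply Submodule.mem_sup_right
          apply Submodule.mem_sup_left
          rw [← hbS]
          exact Submodule.mem_span_singleton_self bS
        | cast j =>
          by_cases hj : j = i0
          · subst hj
            apply Submodule.mem_sup_left
            rw [← haS]
            exact Submodule.mem_span_singleton_self aS
          · apply Submodule.mem_sup_right
            apply Submodule.mem_sup_right
            exact Submodule.subset_span ⟨j, hj, rfl⟩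
      have := Submodule.smul_mem _ (σ (v i)) hui
      rwa [smul_eq_mul] at this
    have := Submodule.smul_mem _ z h1
    rwa [smul_eq_mul, mul_one] at this
  obtain ⟨xS, hxS⟩ := main_semisimple aS bS Kb hhyp
  obtain ⟨x, rfl⟩ := hσsurj xS
  refine ⟨x, ?_⟩
  set w : Fin m → R :=
    fun i => u i.castSucc + if (i : ℕ) = 0 then x * u (Fin.last m) else 0 with hw
  have hwtop : Submodule.span S (Set.range (fun i => σ (w i))) = ⊤ := by
    rw [eq_top_iff, ← hxS]
    apply sup_le
    · rw [Submodule.span_singleton_le_iff_mem]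
      have heq : aS + σ x * bS = σ (w i0) := by
        have : (i0 : ℕ) = 0 := rfl
        simp [hw, this, map_add, map_mul, haS, hbS]
      rw [heq]
      exact Submodule.subset_span ⟨i0, rfl⟩
    · rw [Submodule.span_le]
      rintro z ⟨i, hi, rfl⟩
      have hine : (i : ℕ) ≠ 0 := by
        intro h0
        apply hi
        exact Fin.ext h0
      have heq : σ (u (Fin.castSucc i)) = σ (w i) := by simp [hw, hine]
      show σ (u (Fin.castSucc i)) ∈ (Submodule.span S (Set.range fun i => σ (w i)) : Set S)
      rw [heq]
      exact Submodule.subset_span ⟨i, rfl⟩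
  have h1W : (1 : S) ∈ Submodule.span S (Set.range (fun i => σ (w i))) := by
    rw [hwtop]; trivial
  obtain ⟨vb, hvb⟩ := Submodule.mem_span_range_iff_exists_fun S |>.mp h1W
  choose v' hv' using fun i => hσsurj (vb i)
  have hdiff : (∑ i, v' i * w i) - 1 ∈ J := by
    rw [← hker]
    rw [map_sub, map_one]
    have : σ (∑ i, v' i * w i) = 1 := by
      rw [map_sum, ← hvb]
      apply Finset.sum_congr rfl
      intro i _
      rw [map_mul, hv', smul_eq_mul]
    rw [this, sub_self]
  set L : Ideal R := Submodule.span R (Set.range w) with hL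
  have hLtop : L = ⊤ := by
    apply nakayama_top
    rw [eq_top_iff]
    intro z _
    have h1 : (1 : R) ∈ L ⊔ J := by
      have hsum : (∑ i, v' i * w i) ∈ L := by
        apply Submodule.sum_mem
        intro i _
        have hwi : w i ∈ L := Submodule.subset_span ⟨i, rfl⟩
        have := Submodule.smul_mem L (v' i) hwi
        rwa [smul_eq_mul] at this
      have : (1 : R) = (∑ i, v' i * w i) - ((∑ i, v' i * w i) - 1) := by abel
      rw [this]
      exact Submodule.sub_mem _ (Submodule.mem_sup_left hsum) (Submodule.mem_sup_right hdiff)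
    have := Submodule.smul_mem _ z h1
    rwa [smul_eq_mul, mul_one, hJdef] at this
  have h1L : (1 : R) ∈ L := by rw [hLtop]; trivial
  obtain ⟨vv, hvv⟩ := Submodule.mem_span_range_iff_exists_fun R |>.mp h1L
  refine ⟨vv, ?_⟩
  rw [← hvv]
  apply Finset.sum_congr rfl
  intro i _
  rw [smul_eq_mul]
end
end
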